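/- For any binary predictor f : X → {0,1} and any function γ : X → [0,1] with mean γ̄ = E[γ(x)], there exists a binary partition π : X → {0,1} of the instance space such that E_{π(x)} |C(f(x), γ(x); π(x))| ≥ (1/2) · E|γ(x) − γ̄| · min{E[f], 1 − E[f]}, where C(·,·; π(x)=c) denotes conditional covariance given π(x)=c. -/

import Mathlib

open MeasureTheory

set_option maxHeartbeats 1000000

lemma key (p1 p2 p3 p4 s1 s2 s3 s4 : ℝ)
    (hp1 : 0 ≤ p1) (hp2 : 0 ≤ p2) (hp3 : 0 ≤ p3) (hp4 : 0 ≤ p4)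
    (hpsum : p1 + p2 + p3 + p4 = 1)
    (hs1 : 0 ≤ s1) (hs2 : s2 ≤ 0) (hs3 : 0 ≤ s3) (hs4 : s4 ≤ 0)
    (hssum : s1 + s2 + s3 + s4 = 0)
    (hW : p1 + p4 = 0 → s1 = 0 ∧ s4 = 0)
    (hWc : p2 + p3 = 0 → s2 = 0 ∧ s3 = 0) :
    (1/2) * (s1 - s2 + s3 - s4) * min (p1 + p2) (1 - (p1 + p2)) ≤
      (p1 + p4) * |s1/(p1+p4) - p1/(p1+p4) * ((s1+s4)/(p1+p4))| +
      (p2 + p3) * |s2/(p2+p3) - p2/(p2+p3) * ((s2+s3)/(p2+p3))| := by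
  have h2 : (1/2) * (s1 - s2 + s3 - s4) = s1 + s3 := by linarith
  have hm : min (p1 + p2) (1 - (p1 + p2)) = min (p1 + p2) (p3 + p4) := by
    congr 1; linarith
  rw [h2, hm]
  by_cases hpW : p1 + p4 = 0
  · obtain ⟨e1, e4⟩ := hW hpW
    have e1' : p1 = 0 := by linarith
    have e4' : p4 = 0 := by linarith
    have hpWc : p2 + p3 = 1 := by linarith
    subst e1 e4
    rw [e1', e4']
    simp only [add_zero, zero_add, hpWc, div_one, one_mul, div_zero, zero_div, zero_mul,
      mul_zero, sub_zero]
    have hs2' : s2 = -s3 := by linarith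
    have habs : |s2 - p2 * (s2 + s3)| = s3 := by
      rw [hs2']; ring_nf; rw [abs_neg, abs_of_nonneg hs3]
    rw [habs]
    have hmle : min p2 p3 ≤ 1 := le_trans (min_le_left _ _) (by linarith)
    have hmn : 0 ≤ min p2 p3 := le_min hp2 hp3
    nlinarith
  · by_cases hpWc : p2 + p3 = 0
    · obtain ⟨e2, e3⟩ := hWc hpWc
      have e2' : p2 = 0 := by linarith
      have e3' : p3 = 0 := by linarith
      have hpW1 : p1 + p4 = 1 := by linarith
      subst e2 e3
      rw [e2', e3']
      simp only [add_zero, zero_add, hpW1, div_one, one_mul, div_zero, zero_div, zero_mul,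
        mul_zero, sub_zero]
      have hs4' : s4 = -s1 := by linarith
      have habs : |s1 - p1 * (s1 + s4)| = s1 := by
        rw [hs4']; ring_nf; rw [abs_of_nonneg hs1]
      rw [habs]
      have hmle : min p1 p4 ≤ 1 := le_trans (min_le_left _ _) (by linarith)
      have hmn : 0 ≤ min p1 p4 := le_min hp1 hp4
      nlinarith
    · have hW0 : 0 < p1 + p4 := lt_of_le_of_ne (by linarith) (Ne.symm hpW)
      have hWc0 : 0 < p2 + p3 := lt_of_le_of_ne (by linarith) (Ne.symm hpWc)
      have e1 : s1/(p1+p4) - p1/(p1+p4) * ((s1+s4)/(p1+p4)) = (s1*p4 - s4*p1)/(p1+p4)^2 := by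
        field_simp; ring
      have e2 : s2/(p2+p3) - p2/(p2+p3) * ((s2+s3)/(p2+p3)) = (s2*p3 - s3*p2)/(p2+p3)^2 := by
        field_simp; ring
      rw [e1, e2]
      have a1 : |(s1*p4 - s4*p1)/(p1+p4)^2| = (s1*p4 - s4*p1)/(p1+p4)^2 := by
        rw [abs_of_nonneg]
        apply div_nonneg (by nlinarith) (by positivity)
      have a2 : |(s2*p3 - s3*p2)/(p2+p3)^2| = (s3*p2 - s2*p3)/(p2+p3)^2 := by
        rw [abs_of_nonpos (div_nonpos_of_nonpos_of_nonneg (by nlinarith) (by positivity))]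
        rw [← neg_div]; ring_nf
      rw [a1, a2]
      have t1 : (p1 + p4) * ((s1*p4 - s4*p1)/(p1+p4)^2) = (s1*p4 - s4*p1)/(p1+p4) := by
        field_simp
      have t2 : (p2 + p3) * ((s3*p2 - s2*p3)/(p2+p3)^2) = (s3*p2 - s2*p3)/(p2+p3) := by
        field_simp
      rw [t1, t2]
      rw [div_add_div _ _ (ne_of_gt hW0) (ne_of_gt hWc0), le_div_iff₀ (by positivity)]
      have hwc : (0:ℝ) ≤ (p1+p4) * (p2+p3) := by positivity
      have hmm : min (p1+p2) (p3+p4) * ((p1+p4) * (p2+p3)) ≤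
          min (p4*(p2+p3)) (p2*(p1+p4)) + min (p1*(p2+p3)) (p3*(p1+p4)) := by
        have X1 : (0:ℝ) ≤ p4*(p2+p3)*(1-(p1+p4)) := by
          apply mul_nonneg (mul_nonneg hp4 hWc0.le); linarith
        have X2 : (0:ℝ) ≤ p3*(p1+p4)*(1-(p2+p3)) := by
          apply mul_nonneg (mul_nonneg hp3 hW0.le); linarith
        have X3 : (0:ℝ) ≤ p2*(p1+p4)*(1-(p2+p3)) := by
          apply mul_nonneg (mul_nonneg hp2 hW0.le); linarith
        have X4 : (0:ℝ) ≤ p1*(p2+p3)*(1-(p1+p4)) := by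
          apply mul_nonneg (mul_nonneg hp1 hWc0.le); linarith
        have X5 : (0:ℝ) ≤ ((p1+p4)*(p2+p3))*(p3+p4) := mul_nonneg hwc (by linarith)
        have X6 : (0:ℝ) ≤ ((p1+p4)*(p2+p3))*(p1+p2) := mul_nonneg hwc (by linarith)
        have Y1 := mul_le_mul_of_nonneg_right (min_le_left (p1+p2) (p3+p4)) hwc
        have Y2 := mul_le_mul_of_nonneg_right (min_le_right (p1+p2) (p3+p4)) hwc
        rcases le_total (p4*(p2+p3)) (p2*(p1+p4)) with h1 | h1 <;>
          [rw [min_eq_left h1]; rw [min_eq_right h1]] <;>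
          (rcases le_total (p1*(p2+p3)) (p3*(p1+p4)) with h2 | h2 <;>
            [rw [min_eq_left h2]; rw [min_eq_right h2]]) <;>
          nlinarith [X1, X2, X3, X4, X5, X6, Y1, Y2]
      have A1 : (s1+s3) * min (p4*(p2+p3)) (p2*(p1+p4)) ≤ s1 * (p4*(p2+p3)) + s3 * (p2*(p1+p4)) := by
        nlinarith [min_le_left (p4*(p2+p3)) (p2*(p1+p4)), min_le_right (p4*(p2+p3)) (p2*(p1+p4))]
      have A2 : (s1+s3) * min (p1*(p2+p3)) (p3*(p1+p4)) ≤ (-s4) * (p1*(p2+p3)) + (-s2) * (p3*(p1+p4)) := by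
        have h42 : (-s4) + (-s2) = s1 + s3 := by linarith
        have B1 := mul_le_mul_of_nonneg_left (min_le_left (p1*(p2+p3)) (p3*(p1+p4)))
          (by linarith : (0:ℝ) ≤ -s4)
        have B2 := mul_le_mul_of_nonneg_left (min_le_right (p1*(p2+p3)) (p3*(p1+p4)))
          (by linarith : (0:ℝ) ≤ -s2)
        rw [← h42, add_mul]
        exact add_le_add B1 B2
      have hS : 0 ≤ s1 + s3 := by linarith
      nlinarith [mul_le_mul_of_nonneg_left hmm hS]

/-- Covariance of `f` and `g` conditioned on the set `W` (junk value `0` when `μ W = 0`,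
since integrals over a null set vanish and division by zero is zero in Lean). -/
noncomputable def condCov {X : Type*} [MeasurableSpace X] (μ : Measure X)
    (f g : X → ℝ) (W : Set X) : ℝ :=
  (∫ x in W, f x * g x ∂μ) / (μ W).toReal -
    ((∫ x in W, f x ∂μ) / (μ W).toReal) * ((∫ x in W, g x ∂μ) / (μ W).toReal)

theorem impossibility_tradeoff
    {X : Type*} [MeasurableSpace X] (μ : Measure X) [IsProbabilityMeasure μ]
    (f : X → ℝ) (hf : Measurable f) (hf01 : ∀ x, f x = 0 ∨ f x = 1)
    (γ : X → ℝ) (hγ : Measurable γ) (hγ01 : ∀ x, γ x ∈ Set.Icc (0:ℝ) 1)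
    (γbar : ℝ) (hγbar : γbar = ∫ x, γ x ∂μ) :
    ∃ W : Set X, MeasurableSet W ∧
      (1 / 2) * (∫ x, |γ x - γbar| ∂μ) * min (∫ x, f x ∂μ) (1 - ∫ x, f x ∂μ) ≤
        (μ W).toReal * |condCov μ f γ W| + (μ Wᶜ).toReal * |condCov μ f γ Wᶜ| := by
  classical
  set A : Set X := f ⁻¹' {1} with hAdef
  have hA : MeasurableSet A := hf (measurableSet_singleton 1)
  set B : Set X := {x | γbar ≤ γ x} with hBdef
  have hB : MeasurableSet B := measurableSet_le measurable_const hγ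
  -- integrability
  have hγint : Integrable γ μ := by
    refine Integrable.mono' (integrable_const 1) hγ.aestronglyMeasurable (ae_of_all _ fun x => ?_)
    rw [Real.norm_eq_abs, abs_le]
    exact ⟨by linarith [(hγ01 x).1], (hγ01 x).2⟩
  have hfint : Integrable f μ := by
    refine Integrable.mono' (integrable_const 1) hf.aestronglyMeasurable (ae_of_all _ fun x => ?_)
    rw [Real.norm_eq_abs, abs_le]
    rcases hf01 x with h | h <;> rw [h] <;> norm_num
  have hgint : Integrable (fun x => γ x - γbar) μ := hγint.sub (integrable_const γbar)
  have habsint : Integrable (fun x => |γ x - γbar|) μ := hgint.abs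
  -- f as indicator
  have hfind : f = A.indicator (fun _ => (1:ℝ)) := by
    funext x
    rcases hf01 x with h | h
    · have hx : x ∉ A := by simp [hAdef, h]
      simp [Set.indicator_of_notMem hx, h]
    · have hx : x ∈ A := by simp [hAdef, h]
      simp [Set.indicator_of_mem hx, h]
  have hfγind : (fun x => f x * γ x) = A.indicator γ := by
    funext x
    rcases hf01 x with h | h
    · have hx : x ∉ A := by simp [hAdef, h]
      simp [Set.indicator_of_notMem hx, h]
    · have hx : x ∈ A := by simp [hAdef, h]
      simp [Set.indicator_of_mem hx, h]
  -- the four cells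
  set P1 : Set X := A ∩ B with hP1
  set P2 : Set X := A ∩ Bᶜ with hP2
  set P3 : Set X := Aᶜ ∩ B with hP3
  set P4 : Set X := Aᶜ ∩ Bᶜ with hP4
  have hmP1 : MeasurableSet P1 := hA.inter hB
  have hmP2 : MeasurableSet P2 := hA.inter hB.compl
  have hmP3 : MeasurableSet P3 := hA.compl.inter hB
  have hmP4 : MeasurableSet P4 := hA.compl.inter hB.compl
  set W : Set X := P1 ∪ P4 with hWdef
  have hmW : MeasurableSet W := hmP1.union hmP4
  have hWc : Wᶜ = P2 ∪ P3 := by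
    simp only [hWdef, hP1, hP2, hP3, hP4]
    ext x
    by_cases hx : x ∈ A <;> by_cases hy : x ∈ B <;> simp [hx, hy]
  refine ⟨W, hmW, ?_⟩
  -- real quantities
  set p1 : ℝ := (μ P1).toReal with hp1def
  set p2 : ℝ := (μ P2).toReal with hp2def
  set p3 : ℝ := (μ P3).toReal with hp3def
  set p4 : ℝ := (μ P4).toReal with hp4def
  set s1 : ℝ := ∫ x in P1, (γ x - γbar) ∂μ with hs1def
  set s2 : ℝ := ∫ x in P2, (γ x - γbar) ∂μ with hs2def
  set s3 : ℝ := ∫ x in P3, (γ x - γbar) ∂μ with hs3def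
  set s4 : ℝ := ∫ x in P4, (γ x - γbar) ∂μ with hs4def
  have hp1 : 0 ≤ p1 := ENNReal.toReal_nonneg
  have hp2 : 0 ≤ p2 := ENNReal.toReal_nonneg
  have hp3 : 0 ≤ p3 := ENNReal.toReal_nonneg
  have hp4 : 0 ≤ p4 := ENNReal.toReal_nonneg
  -- toReal additivity helper
  have hadd : ∀ (U V : Set X), Disjoint U V → MeasurableSet V →
      (μ (U ∪ V)).toReal = (μ U).toReal + (μ V).toReal := by
    intro U V hd hV
    rw [measure_union hd hV, ENNReal.toReal_add (measure_ne_top μ _) (measure_ne_top μ _)]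
  have hdAB : Disjoint A Aᶜ := disjoint_compl_right
  have hd14 : Disjoint P1 P4 := hdAB.mono Set.inter_subset_left Set.inter_subset_left
  have hd23 : Disjoint P2 P3 := hdAB.mono Set.inter_subset_left Set.inter_subset_left
  have hd12 : Disjoint P1 P2 := (disjoint_compl_right (a := B)).mono Set.inter_subset_right Set.inter_subset_right
  have hd34 : Disjoint P3 P4 := (disjoint_compl_right (a := B)).mono Set.inter_subset_right Set.inter_subset_right
  have hd13 : Disjoint P1 P3 := hdAB.mono Set.inter_subset_left Set.inter_subset_left
  have hd24 : Disjoint P2 P4 := hdAB.mono Set.inter_subset_left Set.inter_subset_left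
  have hA12 : A = P1 ∪ P2 := by rw [hP1, hP2, Set.inter_union_compl]
  have hAc34 : Aᶜ = P3 ∪ P4 := by rw [hP3, hP4, Set.inter_union_compl]
  have hB13 : B = P1 ∪ P3 := by
    rw [hP1, hP3]; ext x; by_cases hx : x ∈ A <;> simp [hx]
  have hBc24 : Bᶜ = P2 ∪ P4 := by
    rw [hP2, hP4]; ext x; by_cases hx : x ∈ A <;> simp [hx]
  have hμW : (μ W).toReal = p1 + p4 := hadd P1 P4 hd14 hmP4
  have hμWc : (μ Wᶜ).toReal = p2 + p3 := by rw [hWc]; exact hadd P2 P3 hd23 hmP3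
  -- psum
  have hpsum : p1 + p2 + p3 + p4 = 1 := by
    have h1 : (μ A).toReal = p1 + p2 := by rw [hA12]; exact hadd _ _ hd12 hmP2
    have h2 : (μ Aᶜ).toReal = p3 + p4 := by rw [hAc34]; exact hadd _ _ hd34 hmP4
    have h3 : μ A + μ Aᶜ = 1 := by rw [measure_add_measure_compl hA, measure_univ]
    have h4 : (μ A).toReal + (μ Aᶜ).toReal = 1 := by
      rw [← ENNReal.toReal_add (measure_ne_top μ _) (measure_ne_top μ _), h3, ENNReal.toReal_one]
    linarith
  -- signs
  have hs1 : 0 ≤ s1 := by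
    refine setIntegral_nonneg hmP1 fun x hx => ?_
    have : γbar ≤ γ x := hx.2
    linarith
  have hs3 : 0 ≤ s3 := by
    refine setIntegral_nonneg hmP3 fun x hx => ?_
    have : γbar ≤ γ x := hx.2
    linarith
  have hs2 : s2 ≤ 0 := by
    refine setIntegral_nonpos hmP2 fun x hx => ?_
    have : ¬ γbar ≤ γ x := hx.2
    linarith [lt_of_not_ge this]
  have hs4 : s4 ≤ 0 := by
    refine setIntegral_nonpos hmP4 fun x hx => ?_
    have : ¬ γbar ≤ γ x := hx.2
    linarith [lt_of_not_ge this]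
  -- sum of s = 0
  have hstot : s1 + s2 + s3 + s4 = 0 := by
    have hAint : ∫ x in A, (γ x - γbar) ∂μ = s1 + s2 := by
      rw [hA12]
      exact setIntegral_union hd12 hmP2 hgint.integrableOn hgint.integrableOn
    have hAcint : ∫ x in Aᶜ, (γ x - γbar) ∂μ = s3 + s4 := by
      rw [hAc34]
      exact setIntegral_union hd34 hmP4 hgint.integrableOn hgint.integrableOn
    have htot : ∫ x, (γ x - γbar) ∂μ = 0 := by
      rw [integral_sub hγint (integrable_const γbar), integral_const, Measure.real, measure_univ]
      simp [hγbar]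
    have := integral_add_compl hA hgint
    rw [hAint, hAcint, htot] at this
    linarith
  -- integral of |g|
  have habs : ∫ x, |γ x - γbar| ∂μ = s1 - s2 + s3 - s4 := by
    have hBint : ∫ x in B, |γ x - γbar| ∂μ = s1 + s3 := by
      have e : ∫ x in B, |γ x - γbar| ∂μ = ∫ x in B, (γ x - γbar) ∂μ := by
        refine setIntegral_congr_fun hB fun x hx => ?_
        exact abs_of_nonneg (by simpa [hBdef, sub_nonneg] using hx)
      rw [e, hB13]
      exact setIntegral_union hd13 hmP3 hgint.integrableOn hgint.integrableOn
    have hBcint : ∫ x in Bᶜ, |γ x - γbar| ∂μ = -(s2 + s4) := by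
      have e : ∫ x in Bᶜ, |γ x - γbar| ∂μ = ∫ x in Bᶜ, -(γ x - γbar) ∂μ := by
        refine setIntegral_congr_fun hB.compl fun x hx => ?_
        have : ¬ γbar ≤ γ x := hx
        exact abs_of_nonpos (by linarith [lt_of_not_ge this])
      rw [e, integral_neg, hBc24,
        setIntegral_union hd24 hmP4 hgint.integrableOn hgint.integrableOn]
    have := integral_add_compl hB habsint
    rw [hBint, hBcint] at this
    linarith [this]
  -- null conditions
  have hnull : ∀ (S : Set X), (μ S).toReal = 0 → ∫ x in S, (γ x - γbar) ∂μ = 0 := by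
    intro S hS
    have : μ S = 0 := by
      rcases (ENNReal.toReal_eq_zero_iff _).mp hS with h | h
      · exact h
      · exact absurd h (measure_ne_top μ S)
    rw [Measure.restrict_eq_zero.mpr this, integral_zero_measure]
  have hWnull : p1 + p4 = 0 → s1 = 0 ∧ s4 = 0 := by
    intro h
    have e1 : p1 = 0 := by linarith
    have e4 : p4 = 0 := by linarith
    exact ⟨hnull P1 e1, hnull P4 e4⟩
  have hWcnull : p2 + p3 = 0 → s2 = 0 ∧ s3 = 0 := by
    intro h
    have e2 : p2 = 0 := by linarith
    have e3 : p3 = 0 := by linarith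
    exact ⟨hnull P2 e2, hnull P3 e3⟩
  -- set integrals of f and f*γ over a set S
  have hif : ∀ (S : Set X), ∫ x in S, f x ∂μ = (μ (S ∩ A)).toReal := by
    intro S
    rw [hfind, setIntegral_indicator hA, setIntegral_const, smul_eq_mul, mul_one, Measure.real]
  have hifγ : ∀ (S : Set X), ∫ x in S, f x * γ x ∂μ = ∫ x in S ∩ A, γ x ∂μ := by
    intro S
    calc ∫ x in S, f x * γ x ∂μ = ∫ x in S, A.indicator γ x ∂μ := by rw [← hfγind]
    _ = ∫ x in S ∩ A, γ x ∂μ := setIntegral_indicator hA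
  have hWA : W ∩ A = P1 := by
    rw [hWdef, hP1, hP4]
    ext x; by_cases hx : x ∈ A <;> simp [hx]
  have hWcA : Wᶜ ∩ A = P2 := by
    rw [hWc, hP2, hP3]
    ext x; by_cases hx : x ∈ A <;> simp [hx]
  -- t values
  set t1 : ℝ := ∫ x in P1, γ x ∂μ with ht1def
  set t2 : ℝ := ∫ x in P2, γ x ∂μ with ht2def
  set t3 : ℝ := ∫ x in P3, γ x ∂μ with ht3def
  set t4 : ℝ := ∫ x in P4, γ x ∂μ with ht4def
  have hts : ∀ (S : Set X), (∫ x in S, (γ x - γbar) ∂μ) =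
      (∫ x in S, γ x ∂μ) - γbar * (μ S).toReal := by
    intro S
    rw [integral_sub hγint.integrableOn (integrableOn_const (measure_ne_top μ S)),
      setIntegral_const, smul_eq_mul, Measure.real]
    ring
  have hts1 : t1 = s1 + γbar * p1 := by rw [ht1def, hs1def, hts, hp1def]; ring
  have hts2 : t2 = s2 + γbar * p2 := by rw [ht2def, hs2def, hts, hp2def]; ring
  have hts3 : t3 = s3 + γbar * p3 := by rw [ht3def, hs3def, hts, hp3def]; ring
  have hts4 : t4 = s4 + γbar * p4 := by rw [ht4def, hs4def, hts, hp4def]; ring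
  have hγW : ∫ x in W, γ x ∂μ = t1 + t4 := by
    rw [hWdef]
    exact setIntegral_union hd14 hmP4 hγint.integrableOn hγint.integrableOn
  have hγWc : ∫ x in Wᶜ, γ x ∂μ = t2 + t3 := by
    rw [hWc]
    exact setIntegral_union hd23 hmP3 hγint.integrableOn hγint.integrableOn
  -- condCov values
  have hccW : condCov μ f γ W = s1/(p1+p4) - p1/(p1+p4) * ((s1+s4)/(p1+p4)) := by
    rw [condCov, hifγ W, hWA, hif W, hWA, hμW, hγW, ← hp1def, ← ht1def, hts1, hts4]
    by_cases h : p1 + p4 = 0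
    · rw [h]; simp
    · field_simp; ring
  have hccWc : condCov μ f γ Wᶜ = s2/(p2+p3) - p2/(p2+p3) * ((s2+s3)/(p2+p3)) := by
    rw [condCov, hifγ Wᶜ, hWcA, hif Wᶜ, hWcA, hμWc, hγWc, ← hp2def, ← ht2def, hts2, hts3]
    by_cases h : p2 + p3 = 0
    · rw [h]; simp
    · field_simp; ring
  -- total integral of f
  have hμA : (μ A).toReal = p1 + p2 := by rw [hA12]; exact hadd _ _ hd12 hmP2
  have hIf : ∫ x, f x ∂μ = p1 + p2 := by
    rw [hfind, integral_indicator hA, setIntegral_const, smul_eq_mul, mul_one, Measure.real, hμA]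
  rw [habs, hIf, hμW, hμWc, hccW, hccWc]
  exact key p1 p2 p3 p4 s1 s2 s3 s4 hp1 hp2 hp3 hp4 hpsum hs1 hs2 hs3 hs4 hstot hWnull hWcnull
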